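/- If λ and λ* are the lecture hall partitions corresponding to a (t-1)-abacus and the t-abacus obtained by adding a bead at position bᵢ + 2n below the defining bead bᵢ of class i, then |λ*| - |λ| = n + i. -/

import Mathlib

open Finset

/-- The column (in `{1, …, 2n}`) of position `j` on an abacus with `2n` columns. -/
def colOf (n : ℕ) (j : ℤ) : ℤ := (j - 1) % (2 * n) + 1

/-- Position `p` has class `i`: it lies in the column of the defining bead `b i`
or in its dual column. -/
def classEq (n : ℕ) (b : Fin n → ℤ) (i : Fin n) (p : ℤ) : Prop :=
  colOf n p = colOf n (b i) ∨ colOf n p = 2 * n + 1 - colOf n (b i)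

/-- `b` lists the defining beads (in reading order) of a balanced flush abacus diagram
on `2n` columns. -/
def IsAbacusDefiningBeads (n : ℕ) (b : Fin n → ℤ) : Prop :=
  StrictMono b ∧
  (∀ i j : Fin n, i ≠ j →
      colOf n (b i) ≠ colOf n (b j) ∧ colOf n (b i) ≠ 2 * n + 1 - colOf n (b j)) ∧
  (∀ i j : Fin n, 1 - 2 * (n : ℤ) - b j < b i)

/-- The `i`-th part of the lecture hall partition of the abacus with defining beads `b`:
the number of `i`-active positions, i.e. positions `p` with `1 ≤ p ≤ b i` whose class
is at most `i`. -/
noncomputable def lamPart (n : ℕ) (b : Fin n → ℤ) (i : Fin n) : ℕ :=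
  Nat.card {p : ℤ // 1 ≤ p ∧ p ≤ b i ∧ ∃ j : Fin n, j ≤ i ∧ classEq n b j p}

namespace AbacusAux

noncomputable def cnt (m : ℤ) (Q : ℤ → Prop) : ℕ := {p : ℤ | 1 ≤ p ∧ p ≤ m ∧ Q p}.ncard

lemma cnt_finite (m : ℤ) (Q : ℤ → Prop) : {p : ℤ | 1 ≤ p ∧ p ≤ m ∧ Q p}.Finite :=
  (Set.finite_Icc 1 m).subset (fun p hp => Set.mem_Icc.mpr ⟨hp.1, hp.2.1⟩)

lemma cnt_congr {m : ℤ} {Q R : ℤ → Prop} (h : ∀ p, 1 ≤ p → p ≤ m → (Q p ↔ R p)) :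
    cnt m Q = cnt m R := by
  unfold cnt
  congr 1
  ext p
  simp only [Set.mem_setOf_eq]
  constructor
  · rintro ⟨h1, h2, hq⟩; exact ⟨h1, h2, (h p h1 h2).mp hq⟩
  · rintro ⟨h1, h2, hq⟩; exact ⟨h1, h2, (h p h1 h2).mpr hq⟩

lemma cnt_or {m : ℤ} {Q R : ℤ → Prop} (hdisj : ∀ p, Q p → R p → False) :
    cnt m (fun p => Q p ∨ R p) = cnt m Q + cnt m R := by
  unfold cnt
  have h1 : {p : ℤ | 1 ≤ p ∧ p ≤ m ∧ (Q p ∨ R p)}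
      = {p : ℤ | 1 ≤ p ∧ p ≤ m ∧ Q p} ∪ {p : ℤ | 1 ≤ p ∧ p ≤ m ∧ R p} := by
    ext p
    simp only [Set.mem_setOf_eq, Set.mem_union]
    tauto
  rw [h1, Set.ncard_union_eq ?hd (cnt_finite m Q) (cnt_finite m R)]
  case hd =>
    rw [Set.disjoint_left]
    rintro p ⟨_, _, hq⟩ ⟨_, _, hr⟩
    exact hdisj p hq hr

lemma cnt_false (m : ℤ) : cnt m (fun _ => False) = 0 := by
  unfold cnt
  convert Set.ncard_empty ℤ
  ext p
  simp

lemma cnt_of_forall (m : ℤ) {Q : ℤ → Prop} (h : ∀ p, 1 ≤ p → p ≤ m → Q p) :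
    cnt m Q = m.toNat := by
  unfold cnt
  have h1 : {p : ℤ | 1 ≤ p ∧ p ≤ m ∧ Q p} = Set.Icc 1 m := by
    ext p
    simp only [Set.mem_setOf_eq, Set.mem_Icc]
    exact ⟨fun hp => ⟨hp.1, hp.2.1⟩, fun hp => ⟨hp.1, hp.2, h p hp.1 hp.2⟩⟩
  rw [h1, ← Finset.coe_Icc, Set.ncard_coe_finset, Int.card_Icc]
  omega

lemma lamPart_eq_cnt (n : ℕ) (b : Fin n → ℤ) (j : Fin n) :
    lamPart n b j = cnt (b j) (fun p => ∃ k : Fin n, k ≤ j ∧ classEq n b k p) := by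
  unfold lamPart cnt
  exact Nat.card_coe_set_eq _

section ColOf

variable {n : ℕ}

lemma two_n_pos (hn : 1 ≤ n) : (0:ℤ) < 2 * n := by
  have : (1:ℤ) ≤ n := by exact_mod_cast hn
  linarith

lemma colOf_bounds (hn : 1 ≤ n) (p : ℤ) : 1 ≤ colOf n p ∧ colOf n p ≤ 2 * n := by
  have hD := two_n_pos hn
  unfold colOf
  have h1 := Int.emod_nonneg (p - 1) hD.ne'
  have h2 := Int.emod_lt_of_pos (p - 1) hD
  omega

lemma colOf_dvd (p : ℤ) : (2 * (n:ℤ)) ∣ (p - colOf n p) := by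
  unfold colOf
  refine ⟨(p - 1) / (2 * n), ?_⟩
  have := Int.mul_ediv_add_emod (p - 1) (2 * n)
  linarith

lemma colOf_congr {p q : ℤ} (h : (2 * (n:ℤ)) ∣ (p - q)) : colOf n p = colOf n q := by
  unfold colOf
  have h2 : ((p - 1) - (q - 1)) % (2 * (n:ℤ)) = 0 := by
    have h3 : (p - 1) - (q - 1) = p - q := by ring
    rw [h3]
    exact Int.emod_eq_zero_of_dvd h
  have := Int.emod_eq_emod_iff_emod_sub_eq_zero.mpr h2
  omega

lemma colOf_eq_self {p : ℤ} (h1 : 1 ≤ p) (h2 : p ≤ 2 * (n:ℤ)) : colOf n p = p := by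
  unfold colOf
  rw [Int.emod_eq_of_lt (by omega) (by omega)]
  ring

end ColOf

section Count

variable {n : ℕ}

lemma cnt_col (hn : 1 ≤ n) {c m : ℤ} (h1 : 1 ≤ c) (h2 : c ≤ 2 * n) (h3 : c - 2 * n ≤ m) :
    cnt m (fun p => colOf n p = c) = ((m - c) / (2 * (n:ℤ)) + 1).toNat := by
  have hD := two_n_pos hn
  unfold cnt
  have himg : (fun t => c + 2 * (n:ℤ) * t) '' (Set.Icc 0 ((m - c) / (2 * n)))
      = {p : ℤ | 1 ≤ p ∧ p ≤ m ∧ colOf n p = c} := by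
    ext p
    simp only [Set.mem_image, Set.mem_Icc, Set.mem_setOf_eq]
    constructor
    · rintro ⟨t, ⟨ht0, ht1⟩, rfl⟩
      have hub : t * (2 * (n:ℤ)) ≤ m - c := (Int.le_ediv_iff_mul_le hD).mp ht1
      refine ⟨by nlinarith, by nlinarith, ?_⟩
      have hcc : colOf n (c + 2 * (n:ℤ) * t) = colOf n c := colOf_congr ⟨t, by ring⟩
      rw [hcc, colOf_eq_self h1 h2]
    · rintro ⟨hp1, hpm, hcol⟩
      have hdvd : (2 * (n:ℤ)) ∣ (p - c) := by
        have hd := colOf_dvd (n := n) p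
        rwa [hcol] at hd
      obtain ⟨t, ht⟩ := hdvd
      refine ⟨t, ⟨?_, ?_⟩, by linarith⟩
      · by_contra hneg
        push_neg at hneg
        have ht1 : t ≤ -1 := by omega
        nlinarith
      · exact (Int.le_ediv_iff_mul_le hD).mpr (by nlinarith)
  rw [← himg, Set.ncard_image_of_injective _ (fun a b hab => by
    have hq : 2 * (n:ℤ) * a = 2 * n * b := by
      have := hab
      linarith
    exact mul_left_cancel₀ hD.ne' hq)]
  rw [← Finset.coe_Icc, Set.ncard_coe_finset, Int.card_Icc]
  congr 1
  omega

lemma cnt_col_step (hn : 1 ≤ n) {c m : ℤ} (h1 : 1 ≤ c) (h2 : c ≤ 2 * n) (h3 : c - 2 * n ≤ m) :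
    cnt (m + 2 * n) (fun p => colOf n p = c) = cnt m (fun p => colOf n p = c) + 1 := by
  have hD := two_n_pos hn
  rw [cnt_col hn h1 h2 h3, cnt_col hn h1 h2 (by linarith)]
  have he : m + 2 * (n:ℤ) - c = (m - c) + (2 * n) * 1 := by ring
  rw [he, Int.add_mul_ediv_left _ _ hD.ne']
  have h4 : (-1 : ℤ) ≤ (m - c) / (2 * n) := by
    have h5 := Int.ediv_le_ediv hD (show (-1) * (2 * (n:ℤ)) ≤ m - c by linarith)
    rwa [Int.mul_ediv_cancel _ hD.ne'] at h5
  omega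

lemma key_count (hn : 1 ≤ n) {x y c c' : ℤ}
    (hc1 : 1 ≤ c) (hc2 : c ≤ 2 * n) (hc1' : 1 ≤ c') (hc2' : c' ≤ 2 * n)
    (hx : (2 * (n:ℤ)) ∣ x - c) (hy : (2 * (n:ℤ)) ∣ y - c')
    (hxy : x < y) (hyx : y < x + 2 * n)
    (hxc : c - 2 * n ≤ x) (hyd : 1 - c ≤ y) :
    cnt (x + 2 * n) (fun p => colOf n p = c') + cnt (x + 2 * n) (fun p => colOf n p = 2 * n + 1 - c')
      = (cnt y (fun p => colOf n p = c) + cnt y (fun p => colOf n p = 2 * n + 1 - c)) + 1 := by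
  have hD := two_n_pos hn
  obtain ⟨t, ht⟩ := hx
  obtain ⟨w, hw⟩ := hy
  set u : ℤ := y - x with hu
  have hu1 : 1 ≤ u := by omega
  have hu2 : u ≤ 2 * (n:ℤ) - 1 := by omega
  set e : ℤ := w - t with he'
  have he : c + u - c' = (2 * (n:ℤ)) * e := by
    rw [he']
    linear_combination hw - ht
  have he0 : 0 ≤ e := by nlinarith
  have he1 : e ≤ 1 := by nlinarith
  set v : ℤ := 2 * c + u - 1 with hv
  have hv1 : 0 ≤ v := by omega
  rw [cnt_col hn hc1' hc2' (by omega), cnt_col hn (by omega) (by omega) (by omega),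
    cnt_col hn hc1 hc2 (by omega), cnt_col hn (by omega) (by omega) (by omega)]
  have e1 : x + 2 * (n:ℤ) - c' = (2 * n - u) + (2 * n) * (t + e) := by linear_combination ht + he
  have e2 : x + 2 * (n:ℤ) - (2 * n + 1 - c') = v + (2 * n) * (t - e) := by
    rw [hv]; linear_combination ht - he
  have e3 : y - c = u + (2 * (n:ℤ)) * t := by linear_combination ht
  have e4 : y - (2 * (n:ℤ) + 1 - c) = v + (2 * n) * (t - 1) := by rw [hv]; linear_combination ht
  rw [e1, e2, e3, e4, Int.add_mul_ediv_left _ _ hD.ne', Int.add_mul_ediv_left _ _ hD.ne',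
    Int.add_mul_ediv_left _ _ hD.ne', Int.add_mul_ediv_left _ _ hD.ne']
  have hz1 : (2 * (n:ℤ) - u) / (2 * n) = 0 := Int.ediv_eq_zero_of_lt (by omega) (by omega)
  have hz2 : u / (2 * (n:ℤ)) = 0 := Int.ediv_eq_zero_of_lt (by omega) (by omega)
  rw [hz1, hz2]
  set s : ℤ := v / (2 * (n:ℤ)) with hs
  have hs0 : 0 ≤ s := Int.ediv_nonneg hv1 hD.le
  have hst : 0 ≤ s + t := by
    have hyc1 : 0 ≤ v + 2 * (n:ℤ) * t := by linarith [e3]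
    have h6 := Int.ediv_nonneg hyc1 hD.le
    rwa [Int.add_mul_ediv_left _ _ hD.ne'] at h6
  have ht1 : -1 ≤ t := by
    have h5 := Int.ediv_le_ediv hD (show (-1) * (2 * (n:ℤ)) ≤ 2 * n * t by linarith)
    rwa [Int.mul_ediv_cancel _ hD.ne', mul_comm, Int.mul_ediv_cancel _ hD.ne'] at h5
  omega

end Count
end AbacusAux
/-- if `λ` and `λ*` are the lecture hall partitions corresponding to a
`(t-1)`-abacus with defining beads `b` and to the `t`-abacus obtained by adding a bead
at position `bᵢ + 2n` (assumed last in reading order) below the defining bead `bᵢ` of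
class `i`, then `|λ*| - |λ| = n + i` (classes being 1-indexed, `i = (i : Fin n) + 1`). -/
theorem add_bead_sum_increase (n : ℕ) (hn : 1 ≤ n) (b bstar : Fin n → ℤ)
    (hab : IsAbacusDefiningBeads n b) (i : Fin n)
    (hlast : ∀ j : Fin n, b j < b i + 2 * (n : ℤ))
    (hstar_mono : StrictMono bstar)
    (hstar_range : Set.range bstar = insert (b i + 2 * (n : ℤ)) (Set.range b \ {b i})) :
    ∑ j, lamPart n bstar j = (∑ j, lamPart n b j) + (n + ((i : ℕ) + 1)) := by
  classical
  obtain ⟨hmono, hcols, hbal⟩ := hab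
  have hD : (0:ℤ) < 2 * n := AbacusAux.two_n_pos hn
  have hlow : ∀ j : Fin n, 1 - (n:ℤ) ≤ b j := by
    intro j; have := hbal j j; omega
  have hcb : ∀ j : Fin n, 1 ≤ colOf n (b j) ∧ colOf n (b j) ≤ 2 * n :=
    fun j => AbacusAux.colOf_bounds hn (b j)
  have hclb : ∀ k : Fin n, colOf n (b k) - 2 * n ≤ b k := by
    intro k
    rcases le_or_gt 1 (b k) with h | h
    · have := (hcb k).2; omega
    · have hc : colOf n (b k) = b k + 2 * n := by
        have h1 : colOf n (b k) = colOf n (b k + 2 * n) := AbacusAux.colOf_congr ⟨-1, by ring⟩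
        rw [h1, AbacusAux.colOf_eq_self (by have := hlow k; omega) (by omega)]
      omega
  have hclb2 : ∀ k j : Fin n, b k ≤ b j → 1 - colOf n (b k) ≤ b j := by
    intro k j hkj
    rcases le_or_gt 1 (b k) with h | h
    · have := (hcb k).1; omega
    · have hc : colOf n (b k) = b k + 2 * n := by
        have h1 : colOf n (b k) = colOf n (b k + 2 * n) := AbacusAux.colOf_congr ⟨-1, by ring⟩
        rw [h1, AbacusAux.colOf_eq_self (by have := hlow k; omega) (by omega)]
      have := hbal j k
      omega
  -- uniqueness of classes
  have huniq : ∀ {k k' : Fin n} {p : ℤ}, classEq n b k p → classEq n b k' p → k = k' := by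
    intro k k' p h h'
    by_contra hne
    obtain ⟨h1, h2⟩ := hcols k k' hne
    obtain ⟨h3, h4⟩ := hcols k' k (Ne.symm hne)
    unfold classEq at h h'
    rcases h with h | h <;> rcases h' with h' | h' <;> omega
  -- existence of classes
  have hexist : ∀ p : ℤ, ∃ k : Fin n, classEq n b k p := by
    intro p
    have hmem : colOf n p ∈ Finset.Icc (1:ℤ) (2 * n) :=
      Finset.mem_Icc.mpr ⟨(AbacusAux.colOf_bounds hn p).1, (AbacusAux.colOf_bounds hn p).2⟩
    have hinj1 : Set.InjOn (fun k : Fin n => colOf n (b k)) ↑(univ : Finset (Fin n)) := by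
      intro a _ c _ hac
      by_contra hne
      exact (hcols a c hne).1 hac
    have hinj2 : Set.InjOn (fun k : Fin n => 2 * (n:ℤ) + 1 - colOf n (b k))
        ↑(univ : Finset (Fin n)) := by
      intro a _ c _ hac
      by_contra hne
      simp only at hac
      exact (hcols a c hne).1 (by omega)
    set s1 := (univ : Finset (Fin n)).image (fun k : Fin n => colOf n (b k)) with hs1
    set s2 := (univ : Finset (Fin n)).image (fun k : Fin n => 2 * (n:ℤ) + 1 - colOf n (b k))
      with hs2
    have hd : Disjoint s1 s2 := by
      rw [Finset.disjoint_left]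
      rintro a ha1 ha2
      rw [hs1, Finset.mem_image] at ha1
      rw [hs2, Finset.mem_image] at ha2
      obtain ⟨k, _, hk⟩ := ha1
      obtain ⟨k', _, hk'⟩ := ha2
      by_cases hkk : k = k'
      · subst hkk
        omega
      · exact (hcols k k' hkk).2 (by omega)
    have hcard : (s1 ∪ s2).card = 2 * n := by
      rw [Finset.card_union_of_disjoint hd, hs1, hs2,
        Finset.card_image_of_injOn hinj1, Finset.card_image_of_injOn hinj2,
        Finset.card_univ, Fintype.card_fin]
      omega
    have hsub : s1 ∪ s2 ⊆ Finset.Icc (1:ℤ) (2 * n) := by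
      intro a ha
      rcases Finset.mem_union.mp ha with ha | ha
      · rw [hs1, Finset.mem_image] at ha
        obtain ⟨k, _, hk⟩ := ha
        have := hcb k
        exact Finset.mem_Icc.mpr (by omega)
      · rw [hs2, Finset.mem_image] at ha
        obtain ⟨k, _, hk⟩ := ha
        have := hcb k
        exact Finset.mem_Icc.mpr (by omega)
    have hIccCard : (Finset.Icc (1:ℤ) (2 * n)).card = 2 * n := by
      rw [Int.card_Icc]; omega
    have heq : s1 ∪ s2 = Finset.Icc (1:ℤ) (2 * n) :=
      Finset.eq_of_subset_of_card_le hsub (by omega)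
    rw [← heq] at hmem
    rcases Finset.mem_union.mp hmem with hm | hm
    · rw [hs1, Finset.mem_image] at hm
      obtain ⟨k, _, hk⟩ := hm
      exact ⟨k, Or.inl hk.symm⟩
    · rw [hs2, Finset.mem_image] at hm
      obtain ⟨k, _, hk⟩ := hm
      exact ⟨k, Or.inr hk.symm⟩
  -- splitting a class count into the two column counts
  have hsplit : ∀ (k : Fin n) (m : ℤ), AbacusAux.cnt m (fun p => classEq n b k p)
      = AbacusAux.cnt m (fun p => colOf n p = colOf n (b k))
        + AbacusAux.cnt m (fun p => colOf n p = 2 * (n:ℤ) + 1 - colOf n (b k)) := by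
    intro k m
    exact AbacusAux.cnt_or (fun p hp1 hp2 => by have := hcb k; omega)
  have hcntle : ∀ k : Fin n, k ≤ i →
      AbacusAux.cnt (b i + 2 * n) (fun p => classEq n b k p)
        = AbacusAux.cnt (b i) (fun p => classEq n b k p) + 2 := by
    intro k hk
    have hbk : b k ≤ b i := hmono.monotone hk
    have h1 := (hcb k).1
    have h2 := (hcb k).2
    rw [hsplit, hsplit,
      AbacusAux.cnt_col_step hn h1 h2 (by have := hclb k; omega),
      AbacusAux.cnt_col_step hn (by omega) (by omega) (by have := hclb2 k i hbk; omega)]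
    omega
  have hcntgt : ∀ k : Fin n, i < k →
      AbacusAux.cnt (b i + 2 * n) (fun p => classEq n b k p)
        = AbacusAux.cnt (b k) (fun p => classEq n b i p) + 1 := by
    intro k hk
    have hbk : b i < b k := hmono hk
    rw [hsplit, hsplit]
    exact AbacusAux.key_count hn (hcb i).1 (hcb i).2 (hcb k).1 (hcb k).2
      (AbacusAux.colOf_dvd _) (AbacusAux.colOf_dvd _) hbk (hlast k)
      (by have := hclb i; omega) (hclb2 i k hbk.le)
  -- fiberwise decomposition of counts
  have hbiUnion : ∀ (m : ℤ) (t : Finset (Fin n)),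
      AbacusAux.cnt m (fun p => ∃ k ∈ t, classEq n b k p)
        = ∑ k ∈ t, AbacusAux.cnt m (fun p => classEq n b k p) := by
    intro m t
    induction t using Finset.induction_on with
    | empty =>
      rw [Finset.sum_empty]
      have h0 : AbacusAux.cnt m (fun p => ∃ k ∈ (∅ : Finset (Fin n)), classEq n b k p)
          = AbacusAux.cnt m (fun _ => False) := AbacusAux.cnt_congr (by simp)
      rw [h0, AbacusAux.cnt_false]
    | @insert a t ha ih =>
      rw [Finset.sum_insert ha, ← ih]
      have hco : AbacusAux.cnt m (fun p => ∃ k ∈ insert a t, classEq n b k p)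
          = AbacusAux.cnt m (fun p => classEq n b a p ∨ ∃ k ∈ t, classEq n b k p) := by
        apply AbacusAux.cnt_congr
        intro p _ _
        constructor
        · rintro ⟨k, hk, hcl⟩
          rcases Finset.mem_insert.mp hk with rfl | hk'
          · exact Or.inl hcl
          · exact Or.inr ⟨k, hk', hcl⟩
        · rintro (hcl | ⟨k, hk, hcl⟩)
          · exact ⟨a, Finset.mem_insert_self a t, hcl⟩
          · exact ⟨k, Finset.mem_insert_of_mem hk, hcl⟩
      rw [hco, AbacusAux.cnt_or (fun p h1 h2 => by
        obtain ⟨k, hk, hcl⟩ := h2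
        have hak : a = k := huniq h1 hcl
        exact ha (hak ▸ hk))]
  -- the structure of bstar
  set iN : ℕ := (i : ℕ) with hiNdef
  have hiNlt : iN < n := i.isLt
  set f : Fin n → ℤ := fun j =>
    if (j:ℕ) < iN then b j
    else if h2 : (j:ℕ) = n - 1 then b i + 2 * (n:ℤ)
    else b ⟨(j:ℕ) + 1, by have := j.isLt; omega⟩ with hf
  have hfmono : StrictMono f := by
    intro j j' hjj
    have hj := j.isLt
    have hj' := j'.isLt
    have hlt : (j:ℕ) < (j':ℕ) := hjj
    simp only [hf]
    split_ifs with h1 h2 h3 h4 h5 h6 h7 h8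
    all_goals try (exfalso; omega)
    all_goals try exact hmono hjj
    all_goals try exact hlast _
    · exact hmono (by rw [Fin.lt_def]; simp; omega)
    · exact hmono (by rw [Fin.lt_def]; simp; omega)
  have hfrange : Set.range f = insert (b i + 2 * (n:ℤ)) (Set.range b \ {b i}) := by
    apply Set.Subset.antisymm
    · rintro x ⟨j, rfl⟩
      have hj := j.isLt
      by_cases h1 : (j:ℕ) < iN
      · have hfj : f j = b j := by simp only [hf]; rw [if_pos h1]
        rw [hfj]
        refine Set.mem_insert_iff.mpr (Or.inr ⟨⟨j, rfl⟩, ?_⟩)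
        intro hx
        have hji : j = i := hmono.injective hx
        have := congrArg Fin.val hji
        omega
      · by_cases h2 : (j:ℕ) = n - 1
        · have hfj : f j = b i + 2 * (n:ℤ) := by simp only [hf]; rw [if_neg h1, dif_pos h2]
          rw [hfj]
          exact Set.mem_insert _ _
        · have hfj : f j = b ⟨(j:ℕ) + 1, by omega⟩ := by simp only [hf]; rw [if_neg h1, dif_neg h2]
          rw [hfj]
          refine Set.mem_insert_iff.mpr (Or.inr ⟨⟨_, rfl⟩, ?_⟩)
          intro hx
          have hji : (⟨(j:ℕ) + 1, by omega⟩ : Fin n) = i := hmono.injective hx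
          have := congrArg Fin.val hji
          simp only [Fin.val_mk] at this
          omega
    · rintro x hx
      rcases Set.mem_insert_iff.mp hx with rfl | ⟨⟨j, rfl⟩, hne⟩
      · refine ⟨⟨n - 1, by omega⟩, ?_⟩
        simp only [hf]
        have hcnd : ¬(n - 1 < iN) := by omega
        simp [hcnd]
      · have hji : j ≠ i := fun h => hne (by rw [h]; rfl)
        by_cases h1 : (j:ℕ) < iN
        · exact ⟨j, by simp only [hf]; rw [if_pos h1]⟩
        · have hvne : (j:ℕ) ≠ iN := fun h => hji (Fin.ext (by omega))
          have hgt : iN < (j:ℕ) := by omega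
          refine ⟨⟨(j:ℕ) - 1, by omega⟩, ?_⟩
          simp only [hf]
          rw [if_neg (by show ¬((j:ℕ) - 1 < iN); omega),
            dif_neg (by show ¬((j:ℕ) - 1 = n - 1); have := j.isLt; omega)]
          congr 1
          exact Fin.ext (by show (j:ℕ) - 1 + 1 = (j:ℕ); omega)
  have hbstar : bstar = f := by
    have hWF : WellFoundedLT (Fin n) := inferInstance
    exact (hstar_mono.range_inj hfmono).mp (hstar_range.trans hfrange.symm)
  have hbs1 : ∀ k : Fin n, (k:ℕ) < iN → bstar k = b k := by
    intro k hk; rw [hbstar]; simp only [hf]; rw [if_pos hk]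
  have hbs2 : ∀ (k : Fin n) (h : (k:ℕ) + 1 < n), ¬((k:ℕ) < iN) → bstar k = b ⟨(k:ℕ) + 1, h⟩ := by
    intro k h hk; rw [hbstar]; simp only [hf]; rw [if_neg hk, dif_neg (by omega)]
  have hbs3 : ∀ (h : n - 1 < n), bstar ⟨n - 1, h⟩ = b i + 2 * (n:ℤ) := by
    intro h; rw [hbstar]; simp only [hf]
    have hcnd : ¬(n - 1 < iN) := by omega
    simp [hcnd]
  have hclass : ∀ (k k' : Fin n) (p : ℤ), bstar k = b k' →
      (classEq n bstar k p ↔ classEq n b k' p) := by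
    intro k k' p h
    unfold classEq
    rw [h]
  have hclasslast : ∀ (h : n - 1 < n) (p : ℤ),
      classEq n bstar ⟨n - 1, h⟩ p ↔ classEq n b i p := by
    intro h p
    unfold classEq
    rw [hbs3 h]
    have hco : colOf n (b i + 2 * (n:ℤ)) = colOf n (b i) := AbacusAux.colOf_congr ⟨1, by ring⟩
    rw [hco]
  -- the three families of parts
  set G : ℕ → ℕ := fun j => if h : j < n then lamPart n b ⟨j, h⟩ else 0 with hG
  set Gs : ℕ → ℕ := fun j => if h : j < n then lamPart n bstar ⟨j, h⟩ else 0 with hGs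
  set C : ℕ → ℕ := fun k =>
    if h : k < n then AbacusAux.cnt (b ⟨k, h⟩) (fun p => classEq n b i p) else 0 with hC
  have hpartlt : ∀ j : ℕ, j < iN → Gs j = G j := by
    intro j hj
    have hjn : j < n := by omega
    simp only [hGs, hG, dif_pos hjn]
    rw [AbacusAux.lamPart_eq_cnt, AbacusAux.lamPart_eq_cnt,
      hbs1 ⟨j, hjn⟩ (by show j < iN; exact hj)]
    apply AbacusAux.cnt_congr
    intro p _ _
    constructor
    · rintro ⟨k, hk, hcl⟩
      have hk' : (k:ℕ) ≤ j := hk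
      have hkv : (k:ℕ) < iN := by omega
      exact ⟨k, by show (k:ℕ) ≤ j; omega, (hclass k k p (hbs1 k hkv)).mp hcl⟩
    · rintro ⟨k, hk, hcl⟩
      have hk' : (k:ℕ) ≤ j := hk
      have hkv : (k:ℕ) < iN := by omega
      exact ⟨k, by show (k:ℕ) ≤ j; omega, (hclass k k p (hbs1 k hkv)).mpr hcl⟩
  have hpartmid : ∀ j : ℕ, iN ≤ j → ∀ h : j + 1 < n, Gs j + C (j + 1) = G (j + 1) := by
    intro j hij h
    have hjn : j < n := by omega
    simp only [hGs, hG, hC, dif_pos hjn, dif_pos h]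
    rw [AbacusAux.lamPart_eq_cnt, AbacusAux.lamPart_eq_cnt,
      hbs2 ⟨j, hjn⟩ (by show j + 1 < n; exact h) (by show ¬(j < iN); omega)]
    have hQ : AbacusAux.cnt (b ⟨j + 1, h⟩) (fun p => ∃ k, k ≤ (⟨j + 1, h⟩ : Fin n) ∧ classEq n b k p)
        = AbacusAux.cnt (b ⟨j + 1, h⟩)
          (fun p => (∃ k, k ≤ (⟨j, hjn⟩ : Fin n) ∧ classEq n bstar k p) ∨ classEq n b i p) := by
      apply AbacusAux.cnt_congr
      intro p _ _
      constructor
      · rintro ⟨k, hkJ0, hcl⟩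
        have hkJ : (k:ℕ) ≤ j + 1 := hkJ0
        by_cases hki : k = i
        · exact Or.inr (hki ▸ hcl)
        · left
          have hkvne : (k:ℕ) ≠ iN := fun hh => hki (Fin.ext (by omega))
          rcases Nat.lt_or_ge (k:ℕ) iN with hkv | hkv
          · exact ⟨k, by show (k:ℕ) ≤ j; omega,
              (hclass k k p (hbs1 k hkv)).mpr hcl⟩
          · have hgt : iN < (k:ℕ) := by omega
            have hv : bstar ⟨(k:ℕ) - 1, by omega⟩ = b k := by
              rw [hbs2 _ (by show (k:ℕ) - 1 + 1 < n; have := k.isLt; omega)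
                (by show ¬((k:ℕ) - 1 < iN); omega)]
              congr 1
              exact Fin.ext (by show (k:ℕ) - 1 + 1 = (k:ℕ); omega)
            exact ⟨⟨(k:ℕ) - 1, by omega⟩, by show (k:ℕ) - 1 ≤ j; omega,
              (hclass _ k p hv).mpr hcl⟩
      · rintro (⟨k, hkj0, hcl⟩ | hcl)
        · have hkj : (k:ℕ) ≤ j := hkj0
          rcases Nat.lt_or_ge (k:ℕ) iN with hkv | hkv
          · exact ⟨k, by show (k:ℕ) ≤ j + 1; omega,
              (hclass k k p (hbs1 k hkv)).mp hcl⟩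
          · have hv : bstar k = b ⟨(k:ℕ) + 1, by omega⟩ := hbs2 k (by omega) (by omega)
            exact ⟨⟨(k:ℕ) + 1, by omega⟩, by show (k:ℕ) + 1 ≤ j + 1; omega,
              (hclass k _ p hv).mp hcl⟩
        · exact ⟨i, by show iN ≤ j + 1; omega, hcl⟩
    rw [hQ, AbacusAux.cnt_or (fun p hp1 hp2 => by
      obtain ⟨k, hk0, hcl⟩ := hp1
      have hk : (k:ℕ) ≤ j := hk0
      rcases Nat.lt_or_ge (k:ℕ) iN with hkv | hkv
      · have hcl' := (hclass k k p (hbs1 k hkv)).mp hcl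
        have hki := huniq hcl' hp2
        have := congrArg Fin.val hki
        omega
      · have hv : bstar k = b ⟨(k:ℕ) + 1, by omega⟩ := hbs2 k (by omega) (by omega)
        have hcl' := (hclass k _ p hv).mp hcl
        have hki := huniq hcl' hp2
        have := congrArg Fin.val hki
        simp only [Fin.val_mk] at this
        omega)]
  have hpartlast : Gs (n - 1) = (b i + 2 * (n:ℤ)).toNat := by
    have h : n - 1 < n := by omega
    simp only [hGs, dif_pos h]
    rw [AbacusAux.lamPart_eq_cnt, hbs3 h]
    apply AbacusAux.cnt_of_forall
    intro p _ _
    obtain ⟨k0, hk0⟩ := hexist p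
    rcases Nat.lt_or_ge (k0:ℕ) iN with hkv | hkv
    · exact ⟨k0, by show (k0:ℕ) ≤ n - 1; have := k0.isLt; omega,
        (hclass k0 k0 p (hbs1 k0 hkv)).mpr hk0⟩
    · by_cases hki : k0 = i
      · exact ⟨⟨n - 1, h⟩, le_refl _, (hclasslast h p).mpr (hki ▸ hk0)⟩
      · have hvne : (k0:ℕ) ≠ iN := fun hh => hki (Fin.ext (by omega))
        have hgt : iN < (k0:ℕ) := by omega
        have hv : bstar ⟨(k0:ℕ) - 1, by have := k0.isLt; omega⟩ = b k0 := by
          rw [hbs2 _ (by show (k0:ℕ) - 1 + 1 < n; have := k0.isLt; omega)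
            (by show ¬((k0:ℕ) - 1 < iN); omega)]
          congr 1
          exact Fin.ext (by show (k0:ℕ) - 1 + 1 = (k0:ℕ); omega)
        exact ⟨_, by show (k0:ℕ) - 1 ≤ n - 1; have := k0.isLt; omega,
          (hclass _ k0 p hv).mpr hk0⟩
  -- the key cardinality identity
  have hMcard : (b i + 2 * (n:ℤ)).toNat
      = ∑ k : Fin n, AbacusAux.cnt (b i + 2 * (n:ℤ)) (fun p => classEq n b k p) := by
    rw [← hbiUnion (b i + 2 * n) univ]
    symm
    apply AbacusAux.cnt_of_forall
    intro p _ _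
    obtain ⟨k, hk⟩ := hexist p
    exact ⟨k, Finset.mem_univ k, hk⟩
  have hfilterle : (univ.filter (fun k : Fin n => k ≤ i)) = Finset.Iic i := by
    ext k; simp
  have hcard1 : (univ.filter (fun k : Fin n => k ≤ i)).card = iN + 1 := by
    rw [hfilterle, Fin.card_Iic]
  have hGiN : G iN = lamPart n b i := by
    simp only [hG, dif_pos hiNlt]
    rfl
  have hsum_le : ∑ k ∈ univ.filter (fun k : Fin n => k ≤ i),
      AbacusAux.cnt (b i + 2 * n) (fun p => classEq n b k p) = G iN + 2 * (iN + 1) := by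
    rw [Finset.sum_congr rfl (fun k hk => hcntle k (Finset.mem_filter.mp hk).2),
      Finset.sum_add_distrib, Finset.sum_const, smul_eq_mul, hcard1]
    have h2 : ∑ k ∈ univ.filter (fun k : Fin n => k ≤ i),
        AbacusAux.cnt (b i) (fun p => classEq n b k p) = lamPart n b i := by
      rw [AbacusAux.lamPart_eq_cnt, ← hbiUnion (b i) (univ.filter (fun k => k ≤ i))]
      apply AbacusAux.cnt_congr
      intro p _ _
      constructor
      · rintro ⟨k, hk, hcl⟩
        exact ⟨k, (Finset.mem_filter.mp hk).2, hcl⟩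
      · rintro ⟨k, hk, hcl⟩
        exact ⟨k, Finset.mem_filter.mpr ⟨Finset.mem_univ k, hk⟩, hcl⟩
    rw [h2, hGiN]
    ring
  have hcard2 : (univ.filter (fun k : Fin n => ¬k ≤ i)).card = n - (iN + 1) := by
    have h1 := Finset.card_filter_add_card_filter_not
      (s := (univ : Finset (Fin n))) (p := fun k : Fin n => k ≤ i)
    have h2 : (univ : Finset (Fin n)).card = n := by simp
    omega
  have hsum_gt : ∑ k ∈ univ.filter (fun k : Fin n => ¬k ≤ i),
      AbacusAux.cnt (b i + 2 * n) (fun p => classEq n b k p)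
      = (∑ k ∈ Ico (iN + 1) n, C k) + (n - (iN + 1)) := by
    rw [Finset.sum_congr rfl
      (fun k hk => hcntgt k (not_le.mp (Finset.mem_filter.mp hk).2)),
      Finset.sum_add_distrib, Finset.sum_const, smul_eq_mul, hcard2, mul_one]
    congr 1
    refine Finset.sum_bij' (fun (k : Fin n) _ => (k:ℕ))
      (fun m hm => (⟨m, (Finset.mem_Ico.mp hm).2⟩ : Fin n)) ?_ ?_ ?_ ?_ ?_
    · intro k hk
      have hik : iN < (k:ℕ) := not_le.mp (Finset.mem_filter.mp hk).2
      exact Finset.mem_Ico.mpr ⟨by show iN + 1 ≤ (k:ℕ); omega, k.isLt⟩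
    · intro m hm
      have := Finset.mem_Ico.mp hm
      refine Finset.mem_filter.mpr ⟨Finset.mem_univ _, ?_⟩
      rw [not_le, Fin.lt_def]
      simp only [Fin.val_mk]
      omega
    · intro k _
      exact Fin.ext rfl
    · intro m _
      rfl
    · intro k hk
      simp only [hC, dif_pos k.isLt]
  have hstar_key : (b i + 2 * (n:ℤ)).toNat
      = G iN + (∑ k ∈ Ico (iN + 1) n, C k) + (n + iN + 1) := by
    rw [hMcard, ← Finset.sum_filter_add_sum_filter_not univ (fun k : Fin n => k ≤ i),
      hsum_le, hsum_gt]
    omega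
  -- assembling the sums
  have hLHS : ∑ j : Fin n, lamPart n bstar j = ∑ j ∈ range n, Gs j := by
    rw [← Fin.sum_univ_eq_sum_range Gs n]
    apply Finset.sum_congr rfl
    intro j _
    simp only [hGs, dif_pos j.isLt]
  have hRHS : ∑ j : Fin n, lamPart n b j = ∑ j ∈ range n, G j := by
    rw [← Fin.sum_univ_eq_sum_range G n]
    apply Finset.sum_congr rfl
    intro j _
    simp only [hG, dif_pos j.isLt]
  have hsplitGs : ∑ j ∈ range n, Gs j
      = (∑ j ∈ range iN, Gs j) + (∑ j ∈ Ico iN (n - 1), Gs j) + Gs (n - 1) := by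
    have h2 : n = (n - 1) + 1 := by omega
    have h1 : ∑ j ∈ range n, Gs j = ∑ j ∈ range ((n - 1) + 1), Gs j := by rw [← h2]
    rw [h1, Finset.sum_range_succ]
    congr 1
    rw [Finset.range_eq_Ico, ← Finset.sum_Ico_consecutive _ (Nat.zero_le iN)
      (by omega : iN ≤ n - 1), ← Finset.range_eq_Ico]
  have hshift : ∀ (F : ℕ → ℕ), ∑ k ∈ Ico (iN + 1) n, F k = ∑ j ∈ Ico iN (n - 1), F (j + 1) := by
    intro F
    have h1 : Finset.Ico (iN + 1) n = (Finset.Ico iN (n - 1)).map (addRightEmbedding 1) := by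
      rw [Finset.map_add_right_Ico]
      congr 1 <;> omega
    rw [h1, Finset.sum_map]
    rfl
  have hmid : (∑ j ∈ Ico iN (n - 1), Gs j) + (∑ k ∈ Ico (iN + 1) n, C k)
      = ∑ k ∈ Ico (iN + 1) n, G k := by
    rw [hshift C, hshift G, ← Finset.sum_add_distrib]
    apply Finset.sum_congr rfl
    intro j hj
    have hjm := Finset.mem_Ico.mp hj
    exact hpartmid j hjm.1 (by omega)
  have hfirst : ∑ j ∈ range iN, Gs j = ∑ j ∈ range iN, G j :=
    Finset.sum_congr rfl (fun j hj => hpartlt j (Finset.mem_range.mp hj))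
  have hsplitG : ∑ j ∈ range n, G j
      = (∑ j ∈ range iN, G j) + G iN + ∑ k ∈ Ico (iN + 1) n, G k := by
    rw [Finset.range_eq_Ico, ← Finset.sum_Ico_consecutive _ (Nat.zero_le iN) (le_of_lt hiNlt),
      Finset.sum_eq_sum_Ico_succ_bot hiNlt, ← Finset.range_eq_Ico]
    omega
  rw [hLHS, hRHS]
  omega
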